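/- arXiv:2504.02235 — 5 statements merged into one kernel-verified Lean document; each statement's English description precedes it below -/
import Mathlib

section
/- Let Λ be a finite metric lattice with growth constant γ and dimension D, let ℓ ≥ 1, and let H = ∑_{i∈Λ} h_{i[ℓ]} be an operator on H_Λ where each h_{i[ℓ]} is supported on the ball i[ℓ] and ‖h_{i[ℓ]}‖ ≤ 𝔤. Then for every site i₀ and every m ≥ 0, the iterated commutator satisfies ‖ad_H^m(h_{i₀[ℓ]})‖ ≤ 𝔤 · m! · (2γ(2ℓ)^D 𝔤)^m, where ad_H(A) := HA − AH. -/
open scoped Classical ComplexOrder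
noncomputable section

namespace CMI

set_option synthInstance.maxHeartbeats 1000000
set_option maxHeartbeats 1000000
set_option linter.unusedSectionVars false

/-- The operator norm of a complex matrix (norm of the induced map on Euclidean space). -/
def opNorm {n : Type*} [Fintype n] [DecidableEq n] (A : Matrix n n ℂ) : ℝ :=
  ‖LinearMap.toContinuousLinearMap (Matrix.toEuclideanLin A)‖

/-- Configurations (computational-basis labels) of the sites in `S`. -/
abbrev Cfg (Λ : Type*) (d₀ : ℕ) (S : Set Λ) : Type _ := (i : S) → Fin d₀

/-- Configurations of the whole lattice. -/
abbrev FullCfg (Λ : Type*) (d₀ : ℕ) : Type _ := Λ → Fin d₀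

/-- Operators on the Hilbert space of the whole lattice. -/
abbrev FullMat (Λ : Type*) (d₀ : ℕ) : Type _ :=
  Matrix (FullCfg Λ d₀) (FullCfg Λ d₀) ℂ

/-- An operator on `H_Λ` is supported on `S` if it has the form `A_S ⊗ 1_{Sᶜ}`. -/
def MatSupportedOn {Λ : Type*} {d₀ : ℕ} (S : Set Λ) (A : FullMat Λ d₀) : Prop :=
  ∃ f : Cfg Λ d₀ S → Cfg Λ d₀ S → ℂ, ∀ x y : FullCfg Λ d₀,
    A x y = if ∀ i ∉ S, x i = y i then f (fun i => x i) (fun i => y i) else 0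

/-- Growth bound: every ball of radius `r ≥ 1` contains at most `γ r^D` sites. -/
def GrowthBound (Λ : Type*) [Fintype Λ] [MetricSpace Λ] (γ : ℝ) (D : ℕ) : Prop :=
  ∀ (i : Λ) (r : ℝ), 1 ≤ r → ((Metric.closedBall i r).ncard : ℝ) ≤ γ * r ^ D

/-- The commutator map `ad_H(V) = HV - VH`. -/
def adAction {n : Type*} [Fintype n] (H : Matrix n n ℂ) : Matrix n n ℂ → Matrix n n ℂ :=
  fun V => H * V - V * H

section opnorm
variable {n : Type*} [Fintype n] [DecidableEq n]

def clm (A : Matrix n n ℂ) : EuclideanSpace ℂ n →L[ℂ] EuclideanSpace ℂ n :=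
  LinearMap.toContinuousLinearMap (Matrix.toEuclideanLin A)

lemma opNorm_eq (A : Matrix n n ℂ) : opNorm A = ‖clm A‖ := rfl

lemma clm_mul (A B : Matrix n n ℂ) : clm (A * B) = (clm A).comp (clm B) := by
  apply ContinuousLinearMap.ext
  intro v
  simp [clm, Matrix.toEuclideanLin_apply, Matrix.mulVec_mulVec]

lemma opNorm_nonneg (A : Matrix n n ℂ) : 0 ≤ opNorm A := norm_nonneg _

lemma opNorm_mul_le (A B : Matrix n n ℂ) : opNorm (A * B) ≤ opNorm A * opNorm B := by
  rw [opNorm_eq, opNorm_eq, opNorm_eq, clm_mul]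
  exact ContinuousLinearMap.opNorm_comp_le _ _

lemma opNorm_sub_le (A B : Matrix n n ℂ) : opNorm (A - B) ≤ opNorm A + opNorm B := by
  have : clm (A - B) = clm A - clm B := by
    apply ContinuousLinearMap.ext; intro v
    simp [clm, Matrix.toEuclideanLin_apply, Matrix.sub_mulVec]
  rw [opNorm_eq, this]
  exact norm_sub_le _ _

lemma opNorm_sum_le {ι : Type*} (s : Finset ι) (f : ι → Matrix n n ℂ) :
    opNorm (∑ j ∈ s, f j) ≤ ∑ j ∈ s, opNorm (f j) := by
  have hadd : ∀ A B : Matrix n n ℂ, clm (A + B) = clm A + clm B := by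
    intro A B
    apply ContinuousLinearMap.ext; intro v
    simp [clm, Matrix.toEuclideanLin_apply, Matrix.add_mulVec]
  have : clm (∑ j ∈ s, f j) = ∑ j ∈ s, clm (f j) :=
    map_sum (AddMonoidHom.mk' clm hadd) f s
  rw [opNorm_eq, this]
  exact norm_sum_le _ _

end opnorm

section support
variable {Λ : Type*} {d₀ : ℕ} {S T : Set Λ} {A B : FullMat Λ d₀}

lemma supported_zero_off (hA : MatSupportedOn S A) {x y : FullCfg Λ d₀}
    (hxy : ¬ ∀ i ∉ S, x i = y i) : A x y = 0 := by
  obtain ⟨f, hf⟩ := hA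
  rw [hf, if_neg hxy]

lemma supported_invariant (hA : MatSupportedOn S A) {x y x' y' : FullCfg Λ d₀}
    (hx : ∀ i ∈ S, x i = x' i) (hy : ∀ i ∈ S, y i = y' i)
    (hxy : ∀ i ∉ S, x i = y i) (hxy' : ∀ i ∉ S, x' i = y' i) :
    A x y = A x' y' := by
  obtain ⟨f, hf⟩ := hA
  rw [hf, hf, if_pos hxy, if_pos hxy']
  congr 1
  · funext i; exact hx i i.2
  · funext i; exact hy i i.2

lemma matSupportedOn_of (S : Set Λ) (A : FullMat Λ d₀)
    (h0 : ∀ x y : FullCfg Λ d₀, ¬(∀ i ∉ S, x i = y i) → A x y = 0)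
    (hinv : ∀ x y x' y' : FullCfg Λ d₀, (∀ i ∈ S, x i = x' i) → (∀ i ∈ S, y i = y' i) →
      (∀ i ∉ S, x i = y i) → (∀ i ∉ S, x' i = y' i) → A x y = A x' y') :
    MatSupportedOn S A := by
  by_cases hne : Nonempty (FullCfg Λ d₀)
  · obtain ⟨g⟩ := hne
    refine ⟨fun u v => A (fun i => if h : i ∈ S then u ⟨i, h⟩ else g i)
        (fun i => if h : i ∈ S then v ⟨i, h⟩ else g i), fun x y => ?_⟩
    by_cases hxy : ∀ i ∉ S, x i = y i
    · rw [if_pos hxy]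
      exact hinv _ _ _ _ (fun i hi => by simp [hi]) (fun i hi => by simp [hi]) hxy
        (fun i hi => by simp [hi])
    · rw [if_neg hxy]; exact h0 _ _ hxy
  · exact ⟨fun _ _ => 0, fun x => absurd ⟨x⟩ hne⟩

lemma matSupportedOn_mono (hST : S ⊆ T) (hA : MatSupportedOn S A) :
    MatSupportedOn T A := by
  apply matSupportedOn_of
  · intro x y hxy
    refine supported_zero_off hA fun hS => hxy fun i hi => hS i fun hiS => hi (hST hiS)
  · intro x y x' y' hx hy hxy hxy'
    by_cases hS : ∀ i ∉ S, x i = y i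
    · refine supported_invariant hA (fun i hi => hx i (hST hi)) (fun i hi => hy i (hST hi)) hS ?_
      intro i hi
      by_cases hiT : i ∈ T
      · rw [← hx i hiT, ← hy i hiT]; exact hS i hi
      · exact hxy' i hiT
    · rw [supported_zero_off hA hS]
      refine (supported_zero_off hA ?_).symm
      intro hS'
      refine hS fun i hi => ?_
      by_cases hiT : i ∈ T
      · rw [hx i hiT, hy i hiT]; exact hS' i hi
      · exact hxy i hiT

lemma matSupportedOn_sub (hA : MatSupportedOn S A) (hB : MatSupportedOn S B) :
    MatSupportedOn S (A - B) := by
  obtain ⟨f, hf⟩ := hA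
  obtain ⟨g, hg⟩ := hB
  refine ⟨fun u v => f u v - g u v, fun x y => ?_⟩
  rw [Matrix.sub_apply, hf, hg]
  split_ifs <;> simp

variable [Fintype Λ]

variable [Fintype Λ]

lemma matSupportedOn_mul (hA : MatSupportedOn S A) (hB : MatSupportedOn T B) :
    MatSupportedOn (S ∪ T) (A * B) := by
  have key : ∀ x y z : FullCfg Λ d₀,
      ¬((∀ i ∉ S, x i = z i) ∧ (∀ i ∉ T, z i = y i)) → A x z * B z y = 0 := by
    intro x y z hz
    by_cases h1 : ∀ i ∉ S, x i = z i
    · by_cases h2 : ∀ i ∉ T, z i = y i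
      · exact absurd ⟨h1, h2⟩ hz
      · rw [supported_zero_off hB h2, mul_zero]
    · rw [supported_zero_off hA h1, zero_mul]
  apply matSupportedOn_of
  · intro x y hxy
    rw [Matrix.mul_apply]
    refine Finset.sum_eq_zero fun z _ => key x y z ?_
    rintro ⟨h1, h2⟩
    exact hxy fun i hi =>
      (h1 i (fun hiS => hi (Set.mem_union_left _ hiS))).trans
      (h2 i (fun hiT => hi (Set.mem_union_right _ hiT)))
  · intro x y x' y' hx hy hxy hxy'
    rw [Matrix.mul_apply, Matrix.mul_apply]
    have key' : ∀ z : FullCfg Λ d₀,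
        ¬((∀ i ∉ S, x' i = z i) ∧ (∀ i ∉ T, z i = y' i)) → A x' z * B z y' = 0 := key x' y'
    rw [← Finset.sum_filter_of_ne
        (p := fun z => (∀ i ∉ S, x i = z i) ∧ (∀ i ∉ T, z i = y i))
        (fun z _ hz => by_contra fun hg => hz (key x y z hg)),
      ← Finset.sum_filter_of_ne
        (p := fun z => (∀ i ∉ S, x' i = z i) ∧ (∀ i ∉ T, z i = y' i))
        (fun z _ hz => by_contra fun hg => hz (key' z hg))]
    refine Finset.sum_nbij' (fun z i => if i ∈ S ∪ T then z i else x' i)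
      (fun z i => if i ∈ S ∪ T then z i else x i) ?_ ?_ ?_ ?_ ?_
    · intro z hz
      rw [Finset.mem_filter] at hz ⊢
      obtain ⟨-, h1, h2⟩ := hz
      refine ⟨Finset.mem_univ _, fun i hi => ?_, fun i hi => ?_⟩
      · show x' i = if i ∈ S ∪ T then z i else x' i
        by_cases hiT : i ∈ T
        · rw [if_pos (Set.mem_union_right _ hiT), ← h1 i hi]
          exact (hx i (Set.mem_union_right _ hiT)).symm
        · rw [if_neg (fun hiU : i ∈ S ∪ T => hiU.elim hi hiT)]
      · show (if i ∈ S ∪ T then z i else x' i) = y' i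
        by_cases hiS : i ∈ S
        · rw [if_pos (Set.mem_union_left _ hiS), h2 i hi]
          exact hy i (Set.mem_union_left _ hiS)
        · rw [if_neg (fun hiU : i ∈ S ∪ T => hiU.elim hiS hi)]
          exact hxy' i (fun hiU => hiU.elim hiS hi)
    · intro z hz
      rw [Finset.mem_filter] at hz ⊢
      obtain ⟨-, h1, h2⟩ := hz
      refine ⟨Finset.mem_univ _, fun i hi => ?_, fun i hi => ?_⟩
      · show x i = if i ∈ S ∪ T then z i else x i
        by_cases hiT : i ∈ T
        · rw [if_pos (Set.mem_union_right _ hiT), ← h1 i hi]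
          exact hx i (Set.mem_union_right _ hiT)
        · rw [if_neg (fun hiU : i ∈ S ∪ T => hiU.elim hi hiT)]
      · show (if i ∈ S ∪ T then z i else x i) = y i
        by_cases hiS : i ∈ S
        · rw [if_pos (Set.mem_union_left _ hiS), h2 i hi]
          exact (hy i (Set.mem_union_left _ hiS)).symm
        · rw [if_neg (fun hiU : i ∈ S ∪ T => hiU.elim hiS hi)]
          exact hxy i (fun hiU => hiU.elim hiS hi)
    · intro z hz
      rw [Finset.mem_filter] at hz
      obtain ⟨-, h1, h2⟩ := hz
      funext i
      show (if i ∈ S ∪ T then (if i ∈ S ∪ T then z i else x' i) else x i) = z i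
      by_cases hiU : i ∈ S ∪ T
      · rw [if_pos hiU, if_pos hiU]
      · rw [if_neg hiU]
        exact h1 i (fun hiS => hiU (Set.mem_union_left _ hiS))
    · intro z hz
      rw [Finset.mem_filter] at hz
      obtain ⟨-, h1, h2⟩ := hz
      funext i
      show (if i ∈ S ∪ T then (if i ∈ S ∪ T then z i else x i) else x' i) = z i
      by_cases hiU : i ∈ S ∪ T
      · rw [if_pos hiU, if_pos hiU]
      · rw [if_neg hiU]
        exact h1 i (fun hiS => hiU (Set.mem_union_left _ hiS))
    · intro z hz
      rw [Finset.mem_filter] at hz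
      obtain ⟨-, h1, h2⟩ := hz
      congr 1
      · refine supported_invariant hA (fun i hi => hx i (Set.mem_union_left _ hi))
          (fun i hi => by
            show z i = if i ∈ S ∪ T then z i else x' i
            rw [if_pos (Set.mem_union_left _ hi)]) h1 ?_
        intro i hi
        show x' i = if i ∈ S ∪ T then z i else x' i
        by_cases hiT : i ∈ T
        · rw [if_pos (Set.mem_union_right _ hiT), ← h1 i hi]
          exact (hx i (Set.mem_union_right _ hiT)).symm
        · rw [if_neg (fun hiU : i ∈ S ∪ T => hiU.elim hi hiT)]
      · refine supported_invariant hB (fun i hi => by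
            show z i = if i ∈ S ∪ T then z i else x' i
            rw [if_pos (Set.mem_union_right _ hi)])
          (fun i hi => hy i (Set.mem_union_right _ hi)) h2 ?_
        intro i hi
        show (if i ∈ S ∪ T then z i else x' i) = y' i
        by_cases hiS : i ∈ S
        · rw [if_pos (Set.mem_union_left _ hiS), h2 i hi]
          exact hy i (Set.mem_union_left _ hiS)
        · rw [if_neg (fun hiU : i ∈ S ∪ T => hiU.elim hiS hi)]
          exact hxy' i (fun hiU => hiU.elim hiS hi)

lemma commute_of_disjoint (hST : Disjoint S T)
    (hA : MatSupportedOn S A) (hB : MatSupportedOn T B) :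
    A * B = B * A := by
  ext x y
  rw [Matrix.mul_apply, Matrix.mul_apply]
  by_cases hxy : ∀ i ∉ S ∪ T, x i = y i
  · have hz₀ : ∀ z : FullCfg Λ d₀, z ≠ (fun i => if i ∈ S then y i else x i) →
        A x z * B z y = 0 := by
      intro z hz
      by_cases h1 : ∀ i ∉ S, x i = z i
      · by_cases h2 : ∀ i ∉ T, z i = y i
        · exfalso; apply hz; funext i
          by_cases hiS : i ∈ S
          · rw [if_pos hiS]
            exact h2 i (hST.subset_compl_right hiS)
          · rw [if_neg hiS]; exact (h1 i hiS).symm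
        · rw [supported_zero_off hB h2, mul_zero]
      · rw [supported_zero_off hA h1, zero_mul]
    have hz₁ : ∀ z : FullCfg Λ d₀, z ≠ (fun i => if i ∈ T then y i else x i) →
        B x z * A z y = 0 := by
      intro z hz
      by_cases h1 : ∀ i ∉ T, x i = z i
      · by_cases h2 : ∀ i ∉ S, z i = y i
        · exfalso; apply hz; funext i
          by_cases hiT : i ∈ T
          · rw [if_pos hiT]
            exact h2 i (hST.subset_compl_left hiT)
          · rw [if_neg hiT]; exact (h1 i hiT).symm
        · rw [supported_zero_off hA h2, mul_zero]
      · rw [supported_zero_off hB h1, zero_mul]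
    rw [Finset.sum_eq_single _ (fun z _ hz => hz₀ z hz) (fun h => absurd (Finset.mem_univ _) h),
      Finset.sum_eq_single _ (fun z _ hz => hz₁ z hz) (fun h => absurd (Finset.mem_univ _) h)]
    have e1 : A x (fun i => if i ∈ S then y i else x i)
        = A (fun i => if i ∈ T then y i else x i) y := by
      refine supported_invariant hA (fun i hi => (if_neg (hST.subset_compl_right hi)).symm)
        (fun i hi => (if_pos hi)) (fun i hi => (if_neg hi).symm) ?_
      intro i hi
      show (if i ∈ T then y i else x i) = y i
      by_cases hiT : i ∈ T
      · rw [if_pos hiT]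
      · rw [if_neg hiT]; exact hxy i (fun hiU => hiU.elim hi hiT)
    have e2 : B (fun i => if i ∈ S then y i else x i) y
        = B x (fun i => if i ∈ T then y i else x i) := by
      refine supported_invariant hB (fun i hi => (if_neg (hST.subset_compl_left hi)))
        (fun i hi => (if_pos hi).symm) ?_ (fun i hi => (if_neg hi).symm)
      intro i hi
      show (if i ∈ S then y i else x i) = y i
      by_cases hiS : i ∈ S
      · rw [if_pos hiS]
      · rw [if_neg hiS]; exact hxy i (fun hiU => hiU.elim hiS hi)
    rw [e1, e2, mul_comm]
  · refine (Finset.sum_eq_zero fun z _ => ?_).trans (Finset.sum_eq_zero fun z _ => ?_).symm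
    · by_cases h1 : ∀ i ∉ S, x i = z i
      · have hB0 : B z y = 0 := by
          refine supported_zero_off hB fun h2 => hxy fun i hi => ?_
          exact (h1 i fun hiS => hi (Set.mem_union_left _ hiS)).trans
            (h2 i fun hiT => hi (Set.mem_union_right _ hiT))
        rw [hB0, mul_zero]
      · rw [supported_zero_off hA h1, zero_mul]
    · by_cases h1 : ∀ i ∉ T, x i = z i
      · have hA0 : A z y = 0 := by
          refine supported_zero_off hA fun h2 => hxy fun i hi => ?_
          exact (h1 i fun hiT => hi (Set.mem_union_right _ hiT)).trans
            (h2 i fun hiS => hi (Set.mem_union_left _ hiS))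
        rw [hA0, mul_zero]
      · rw [supported_zero_off hB h1, zero_mul]

end support

section main
variable {Λ : Type*} [Fintype Λ] [MetricSpace Λ] {d₀ D : ℕ} {γ 𝔤 ℓ : ℝ}

lemma adAction_add (H : FullMat Λ d₀) (A B : FullMat Λ d₀) :
    adAction H (A + B) = adAction H A + adAction H B := by
  simp only [adAction]
  noncomm_ring

lemma adAction_zero (H : FullMat Λ d₀) : adAction H 0 = 0 := by
  simp [adAction]

lemma adAction_iterate_sum (H : FullMat Λ d₀) (m : ℕ) {ι : Type*} (s : Finset ι)
    (f : ι → FullMat Λ d₀) :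
    (adAction H)^[m] (∑ j ∈ s, f j) = ∑ j ∈ s, (adAction H)^[m] (f j) := by
  induction m generalizing f with
  | zero => simp
  | succ m ihm =>
    rw [Function.iterate_succ_apply]
    have : adAction H (∑ j ∈ s, f j) = ∑ j ∈ s, adAction H (f j) :=
      map_sum (AddMonoidHom.mk' (adAction H) (adAction_add H)) f s
    rw [this, ihm]
    exact Finset.sum_congr rfl fun j _ => (Function.iterate_succ_apply _ _ _).symm

lemma main_ind (hγ : 1 ≤ γ) (h𝔤 : 0 < 𝔤) (hℓ : 1 ≤ ℓ) (hgrowth : GrowthBound Λ γ D)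
    (h : Λ → FullMat Λ d₀)
    (hsupp : ∀ i : Λ, MatSupportedOn (Metric.closedBall i ℓ) (h i))
    (hnorm : ∀ i : Λ, opNorm (h i) ≤ 𝔤) :
    ∀ (m nn : ℕ) (T : Finset Λ) (V : FullMat Λ d₀), T.card ≤ nn →
      MatSupportedOn (⋃ c ∈ (T : Set Λ), Metric.closedBall c ℓ) V →
      opNorm ((adAction (∑ i : Λ, h i))^[m] V) ≤
        opNorm V * ∏ k ∈ Finset.range m, (2 * 𝔤 * γ * (2 * ℓ) ^ D * ((nn : ℝ) + (k : ℝ))) := by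
  have hC : (0:ℝ) < 2 * 𝔤 * γ * (2 * ℓ) ^ D := by positivity
  intro m
  induction m with
  | zero => intro nn T V _ _; simp
  | succ m ih =>
    intro nn T V hcard hsuppV
    set U : Set Λ := ⋃ c ∈ (T : Set Λ), Metric.closedBall c ℓ with hU
    set J : Finset Λ := Finset.univ.filter (fun j => ∃ c ∈ T, dist j c ≤ 2 * ℓ) with hJ
    have hsum : adAction (∑ i : Λ, h i) V = ∑ j ∈ J, adAction (h j) V := by
      have h1 : adAction (∑ i : Λ, h i) V = ∑ j : Λ, adAction (h j) V := by
        simp only [adAction, Finset.sum_mul, Finset.mul_sum, Finset.sum_sub_distrib]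
      rw [h1]
      symm
      apply Finset.sum_subset (Finset.subset_univ _)
      intro j _ hj
      have hdisj : Disjoint (Metric.closedBall j ℓ) U := by
        rw [Set.disjoint_left]
        intro p hp hpU
        rw [hU, Set.mem_iUnion₂] at hpU
        obtain ⟨c, hc, hpc⟩ := hpU
        apply hj
        rw [hJ, Finset.mem_filter]
        refine ⟨Finset.mem_univ _, c, hc, ?_⟩
        calc dist j c ≤ dist j p + dist p c := dist_triangle _ _ _
          _ ≤ ℓ + ℓ := by
              gcongr
              · rw [dist_comm]; exact hp
              · exact hpc
          _ = 2 * ℓ := by ring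
      have hcomm := commute_of_disjoint hdisj (hsupp j) hsuppV
      show h j * V - V * h j = 0
      rw [hcomm, sub_self]
    -- counting
    have hcount : (J.card : ℝ) ≤ (nn : ℝ) * (γ * (2 * ℓ) ^ D) := by
      have hsub : J ⊆ T.biUnion
          (fun c => (Set.toFinite (Metric.closedBall c (2 * ℓ))).toFinset) := by
        intro j hjJ
        rw [hJ, Finset.mem_filter] at hjJ
        obtain ⟨-, c, hc, hjc⟩ := hjJ
        rw [Finset.mem_biUnion]
        exact ⟨c, hc, by rw [Set.Finite.mem_toFinset]; exact Metric.mem_closedBall.mpr hjc⟩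
      have h2ℓ : (1:ℝ) ≤ 2 * ℓ := by linarith
      calc (J.card : ℝ)
          ≤ ((T.biUnion
            (fun c => (Set.toFinite (Metric.closedBall c (2 * ℓ))).toFinset)).card : ℝ) := by
            exact_mod_cast Finset.card_le_card hsub
        _ ≤ ((∑ c ∈ T, ((Set.toFinite (Metric.closedBall c (2 * ℓ))).toFinset).card : ℕ) : ℝ) := by
            exact_mod_cast Finset.card_biUnion_le
        _ = ∑ c ∈ T, (((Set.toFinite (Metric.closedBall c (2 * ℓ))).toFinset).card : ℝ) := by
            push_cast; ring
        _ ≤ ∑ c ∈ T, γ * (2 * ℓ) ^ D := by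
            refine Finset.sum_le_sum fun c _ => ?_
            have := hgrowth c (2 * ℓ) h2ℓ
            rwa [Set.ncard_eq_toFinset_card _ (Set.toFinite _)] at this
        _ = (T.card : ℝ) * (γ * (2 * ℓ) ^ D) := by
            rw [Finset.sum_const, nsmul_eq_mul]
        _ ≤ (nn : ℝ) * (γ * (2 * ℓ) ^ D) := by
            have : (T.card : ℝ) ≤ (nn : ℝ) := by exact_mod_cast hcard
            have hpos : (0:ℝ) ≤ γ * (2 * ℓ) ^ D := by positivity
            exact mul_le_mul_of_nonneg_right this hpos
    -- per-term bound
    have hterm : ∀ j ∈ J, opNorm ((adAction (∑ i : Λ, h i))^[m] (adAction (h j) V)) ≤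
        (2 * 𝔤 * opNorm V) *
          ∏ k ∈ Finset.range m, (2 * 𝔤 * γ * (2 * ℓ) ^ D * ((nn : ℝ) + 1 + (k : ℝ))) := by
      intro j _
      have hsuppj : MatSupportedOn (⋃ c ∈ ((insert j T : Finset Λ) : Set Λ),
          Metric.closedBall c ℓ) (adAction (h j) V) := by
        have hset : (⋃ c ∈ ((insert j T : Finset Λ) : Set Λ), Metric.closedBall c ℓ)
            = Metric.closedBall j ℓ ∪ U := by
          rw [Finset.coe_insert, Set.biUnion_insert, hU]
        rw [hset]
        show MatSupportedOn _ (h j * V - V * h j)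
        refine matSupportedOn_sub (matSupportedOn_mul (hsupp j) hsuppV) ?_
        exact matSupportedOn_mono (by rw [Set.union_comm]) (matSupportedOn_mul hsuppV (hsupp j))
      have hIH := ih (nn + 1) (insert j T) (adAction (h j) V)
        (le_trans (Finset.card_insert_le _ _) (by omega)) hsuppj
      have hnormj : opNorm (adAction (h j) V) ≤ 2 * 𝔤 * opNorm V := by
        have h1 : opNorm (h j * V) ≤ 𝔤 * opNorm V :=
          le_trans (opNorm_mul_le _ _)
            (mul_le_mul_of_nonneg_right (hnorm j) (opNorm_nonneg V))
        have h2 : opNorm (V * h j) ≤ 𝔤 * opNorm V := by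
          refine le_trans (opNorm_mul_le _ _) ?_
          rw [mul_comm]
          exact mul_le_mul_of_nonneg_right (hnorm j) (opNorm_nonneg V)
        calc opNorm (adAction (h j) V) = opNorm (h j * V - V * h j) := rfl
          _ ≤ opNorm (h j * V) + opNorm (V * h j) := opNorm_sub_le _ _
          _ ≤ 𝔤 * opNorm V + 𝔤 * opNorm V := add_le_add h1 h2
          _ = 2 * 𝔤 * opNorm V := by ring
      have hprodeq : ∏ k ∈ Finset.range m,
            (2 * 𝔤 * γ * (2 * ℓ) ^ D * (((nn + 1 : ℕ) : ℝ) + (k : ℝ)))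
          = ∏ k ∈ Finset.range m, (2 * 𝔤 * γ * (2 * ℓ) ^ D * ((nn : ℝ) + 1 + (k : ℝ))) := by
        refine Finset.prod_congr rfl fun k _ => ?_
        push_cast
        ring
      rw [hprodeq] at hIH
      refine le_trans hIH ?_
      have hprodnn : (0:ℝ) ≤ ∏ k ∈ Finset.range m,
          (2 * 𝔤 * γ * (2 * ℓ) ^ D * ((nn : ℝ) + 1 + (k : ℝ))) := by
        refine Finset.prod_nonneg fun k _ => ?_
        have : (0:ℝ) ≤ (nn : ℝ) + 1 + (k : ℝ) := by positivity
        positivity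
      exact mul_le_mul_of_nonneg_right hnormj hprodnn
    -- assemble
    rw [Function.iterate_succ_apply, hsum, adAction_iterate_sum]
    calc opNorm (∑ j ∈ J, (adAction (∑ i : Λ, h i))^[m] (adAction (h j) V))
        ≤ ∑ j ∈ J, opNorm ((adAction (∑ i : Λ, h i))^[m] (adAction (h j) V)) :=
          opNorm_sum_le _ _
      _ ≤ ∑ _j ∈ J, (2 * 𝔤 * opNorm V) *
            ∏ k ∈ Finset.range m, (2 * 𝔤 * γ * (2 * ℓ) ^ D * ((nn : ℝ) + 1 + (k : ℝ))) :=
          Finset.sum_le_sum hterm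
      _ = (J.card : ℝ) * ((2 * 𝔤 * opNorm V) *
            ∏ k ∈ Finset.range m, (2 * 𝔤 * γ * (2 * ℓ) ^ D * ((nn : ℝ) + 1 + (k : ℝ)))) := by
          rw [Finset.sum_const, nsmul_eq_mul]
      _ ≤ ((nn : ℝ) * (γ * (2 * ℓ) ^ D)) * ((2 * 𝔤 * opNorm V) *
            ∏ k ∈ Finset.range m, (2 * 𝔤 * γ * (2 * ℓ) ^ D * ((nn : ℝ) + 1 + (k : ℝ)))) := by
          refine mul_le_mul_of_nonneg_right hcount ?_
          have hprodnn : (0:ℝ) ≤ ∏ k ∈ Finset.range m,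
              (2 * 𝔤 * γ * (2 * ℓ) ^ D * ((nn : ℝ) + 1 + (k : ℝ))) := by
            refine Finset.prod_nonneg fun k _ => ?_
            have : (0:ℝ) ≤ (nn : ℝ) + 1 + (k : ℝ) := by positivity
            positivity
          have := opNorm_nonneg V
          positivity
      _ = opNorm V * ∏ k ∈ Finset.range (m + 1),
            (2 * 𝔤 * γ * (2 * ℓ) ^ D * ((nn : ℝ) + (k : ℝ))) := by
          rw [Finset.prod_range_succ']
          have : ∏ k ∈ Finset.range m, (2 * 𝔤 * γ * (2 * ℓ) ^ D * ((nn : ℝ) + ((k + 1 : ℕ) : ℝ)))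
              = ∏ k ∈ Finset.range m,
                  (2 * 𝔤 * γ * (2 * ℓ) ^ D * ((nn : ℝ) + 1 + (k : ℝ))) := by
            refine Finset.prod_congr rfl fun k _ => ?_
            push_cast
            ring
          rw [this]
          push_cast
          ring

end main


/-- For `H = ∑_i h_{i[ℓ]}` with `h_{i[ℓ]}` supported on the ball `i[ℓ]`
and `‖h_{i[ℓ]}‖ ≤ 𝔤`, the iterated commutators satisfy
`‖ad_H^m(h_{i₀[ℓ]})‖ ≤ 𝔤 · m! · (2γ(2ℓ)^D 𝔤)^m`. -/
theorem iterated_commutator_norm_bound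
    {Λ : Type*} [Fintype Λ] [MetricSpace Λ] (d₀ D : ℕ) (γ 𝔤 ℓ : ℝ)
    (hγ : 1 ≤ γ) (h𝔤 : 0 < 𝔤) (hℓ : 1 ≤ ℓ) (hgrowth : GrowthBound Λ γ D)
    (h : Λ → FullMat Λ d₀)
    (hsupp : ∀ i : Λ, MatSupportedOn (Metric.closedBall i ℓ) (h i))
    (hnorm : ∀ i : Λ, opNorm (h i) ≤ 𝔤)
    (i₀ : Λ) (m : ℕ) :
    opNorm ((adAction (∑ i : Λ, h i))^[m] (h i₀)) ≤
      𝔤 * m.factorial * (2 * γ * (2 * ℓ) ^ D * 𝔤) ^ m := by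
  have hsupp₀ : MatSupportedOn (⋃ c ∈ (({i₀} : Finset Λ) : Set Λ),
      Metric.closedBall c ℓ) (h i₀) := by
    have hset : (⋃ c ∈ (({i₀} : Finset Λ) : Set Λ), Metric.closedBall c ℓ)
        = Metric.closedBall i₀ ℓ := by simp
    rw [hset]
    exact hsupp i₀
  have hfact : ∏ k ∈ Finset.range m, (((1:ℕ) : ℝ) + (k : ℝ)) = (m.factorial : ℝ) := by
    induction m with
    | zero => simp
    | succ m ihm =>
      rw [Finset.prod_range_succ, ihm, Nat.factorial_succ]
      push_cast
      ring
  have key := main_ind hγ h𝔤 hℓ hgrowth h hsupp hnorm m 1 {i₀} (h i₀)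
    (by simp) hsupp₀
  have hprod : ∏ k ∈ Finset.range m, (2 * 𝔤 * γ * (2 * ℓ) ^ D * (((1:ℕ) : ℝ) + (k : ℝ)))
      = (2 * 𝔤 * γ * (2 * ℓ) ^ D) ^ m * (m.factorial : ℝ) := by
    rw [Finset.prod_mul_distrib, Finset.prod_const, Finset.card_range, hfact]
  rw [hprod] at key
  calc opNorm ((adAction (∑ i : Λ, h i))^[m] (h i₀))
      ≤ opNorm (h i₀) * ((2 * 𝔤 * γ * (2 * ℓ) ^ D) ^ m * (m.factorial : ℝ)) := key
    _ ≤ 𝔤 * ((2 * 𝔤 * γ * (2 * ℓ) ^ D) ^ m * (m.factorial : ℝ)) := by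
        refine mul_le_mul_of_nonneg_right (hnorm i₀) ?_
        positivity
    _ = 𝔤 * m.factorial * (2 * γ * (2 * ℓ) ^ D * 𝔤) ^ m := by ring

end CMI
end
end

section
/- Let H and V be complex square matrices of the same size, let c > 0, and suppose that the iterated commutators satisfy ‖ad_H^m(V)‖ ≤ ‖V‖ c^m m! for every m ≥ 1, where ad_H(V) := HV − VH. Then for every real x with c|x| < 1, ‖e^{xH} V e^{−xH}‖ ≤ ‖V‖ / (1 − c|x|). -/
open scoped Classical ComplexOrder
noncomputable section

set_option maxHeartbeats 800000
set_option synthInstance.maxHeartbeats 400000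

namespace CMI

section Aux

open NormedSpace

variable {B : Type*} [NormedRing B] [NormedAlgebra ℂ B] [CompleteSpace B]

/-- Left multiplication as an algebra homomorphism into continuous linear endomorphisms. -/
def lmulCLM (B : Type*) [NormedRing B] [NormedAlgebra ℂ B] : B →ₐ[ℂ] (B →L[ℂ] B) where
  toFun a := ContinuousLinearMap.mul ℂ B a
  map_one' := by ext w; simp
  map_mul' a b := by ext w; simp [mul_assoc]
  map_zero' := by ext w; simp
  map_add' a b := by ext w; simp [add_mul]
  commutes' z := by
    ext w
    simp [Algebra.algebraMap_eq_smul_one, smul_mul_assoc]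

/-- Right multiplication as an algebra homomorphism from the opposite algebra. -/
def rmulCLM (B : Type*) [NormedRing B] [NormedAlgebra ℂ B] : Bᵐᵒᵖ →ₐ[ℂ] (B →L[ℂ] B) where
  toFun a := (ContinuousLinearMap.mul ℂ B).flip a.unop
  map_one' := by ext w; simp
  map_mul' a b := by ext w; simp [mul_assoc]
  map_zero' := by ext w; simp
  map_add' a b := by ext w; simp [mul_add]
  commutes' z := by
    ext w
    simp [Algebra.algebraMap_eq_smul_one, mul_smul_comm]

omit [CompleteSpace B] in
lemma lmulCLM_continuous : Continuous (lmulCLM B) :=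
  (ContinuousLinearMap.mul ℂ B).continuous

omit [CompleteSpace B] in
lemma rmulCLM_continuous : Continuous (rmulCLM B) :=
  (ContinuousLinearMap.mul ℂ B).flip.continuous.comp MulOpposite.continuous_unop

/-- Conjugation by `exp` equals the exponential of `ad` applied to `v`. -/
lemma conj_exp_eq (a v : B) :
    exp a * v * exp (-a) =
      exp (ContinuousLinearMap.mul ℂ B a - (ContinuousLinearMap.mul ℂ B).flip a) v := by
  let +nondep : NormedAlgebra ℚ B := .restrictScalars ℚ ℂ B
  let +nondep : NormedAlgebra ℚ (B →L[ℂ] B) := .restrictScalars ℚ ℂ (B →L[ℂ] B)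
  set L : B →L[ℂ] B := ContinuousLinearMap.mul ℂ B a
  set R : B →L[ℂ] B := (ContinuousLinearMap.mul ℂ B).flip a
  have hcomm : Commute L (-R) := by
    have : Commute L R := by
      ext w
      simp [L, R, mul_assoc]
    exact this.neg_right
  have h1 : exp (L - R) = exp L * exp (-R) := by
    rw [sub_eq_add_neg]
    exact exp_add_of_commute hcomm
  have hL : exp L = ContinuousLinearMap.mul ℂ B (exp a) := by
    have := map_exp (lmulCLM B) lmulCLM_continuous a
    simpa [lmulCLM] using this.symm
  have hR : exp (-R) = (ContinuousLinearMap.mul ℂ B).flip (exp (-a)) := by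
    have h2 := map_exp (rmulCLM B) rmulCLM_continuous (MulOpposite.op (-a))
    have h3 : rmulCLM B (MulOpposite.op (-a)) = -R := by
      simp [rmulCLM, R]
    rw [exp_op, h3] at h2
    simpa [rmulCLM] using h2.symm
  rw [h1, hL, hR]
  simp [mul_assoc]

/-- The abstract Banach-algebra version of the norm bound. -/
lemma abstract_bound (h v : B) (c : ℝ) (hc : 0 < c)
    (had : ∀ m : ℕ, 1 ≤ m →
      ‖(fun w : B => h * w - w * h)^[m] v‖ ≤ ‖v‖ * c ^ m * m.factorial)
    (x : ℝ) (hx : c * |x| < 1) :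
    ‖exp ((x : ℂ) • h) * v * exp (-((x : ℂ) • h))‖ ≤ ‖v‖ / (1 - c * |x|) := by
  rw [conj_exp_eq]
  set T : B →L[ℂ] B :=
    ContinuousLinearMap.mul ℂ B ((x : ℂ) • h) -
      (ContinuousLinearMap.mul ℂ B).flip ((x : ℂ) • h) with hT
  have hTap : ∀ w : B, T w = (x : ℂ) • (h * w - w * h) := by
    intro w
    simp [hT, smul_mul_assoc, mul_smul_comm, smul_sub]
  have hpow : ∀ m : ℕ, (T ^ m) v = (x : ℂ) ^ m • (fun w : B => h * w - w * h)^[m] v := by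
    intro m
    induction m with
    | zero => simp
    | succ m ih =>
      rw [pow_succ', ContinuousLinearMap.mul_apply, ih, map_smul, hTap,
        Function.iterate_succ_apply', smul_smul, ← pow_succ]
  have hkey : ∀ m : ℕ, ‖((m.factorial⁻¹ : ℂ) • T ^ m) v‖ ≤ ‖v‖ * (c * |x|) ^ m := by
    intro m
    have heq : ((m.factorial⁻¹ : ℂ) • T ^ m) v
        = (m.factorial⁻¹ : ℂ) • ((x : ℂ) ^ m • (fun w : B => h * w - w * h)^[m] v) := by
      rw [ContinuousLinearMap.smul_apply, hpow]
    rw [heq, norm_smul, norm_smul, norm_pow]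
    have e1 : ‖(m.factorial⁻¹ : ℂ)‖ = ((m.factorial : ℝ))⁻¹ := by simp
    have e2 : ‖(x : ℂ)‖ = |x| := by rw [Complex.norm_real, Real.norm_eq_abs]
    rw [e1, e2]
    rcases Nat.eq_zero_or_pos m with hm | hm
    · subst hm
      simp
    · have hb := had m hm
      have hfac : (0 : ℝ) < (m.factorial : ℝ) := by exact_mod_cast m.factorial_pos
      calc ((m.factorial : ℝ))⁻¹ * (|x| ^ m * ‖(fun w : B => h * w - w * h)^[m] v‖)
          ≤ ((m.factorial : ℝ))⁻¹ * (|x| ^ m * (‖v‖ * c ^ m * m.factorial)) := by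
            gcongr
        _ = ‖v‖ * (c * |x|) ^ m := by
            rw [mul_pow]
            field_simp
  have hr0 : 0 ≤ c * |x| := mul_nonneg hc.le (abs_nonneg x)
  have hgeo : Summable (fun m : ℕ => ‖v‖ * (c * |x|) ^ m) :=
    (summable_geometric_of_lt_one hr0 hx).mul_left _
  have hs : HasSum (fun m : ℕ => (m.factorial⁻¹ : ℂ) • T ^ m) (exp T) :=
    exp_series_hasSum_exp' T
  have hsv : HasSum (fun m : ℕ => ((m.factorial⁻¹ : ℂ) • T ^ m) v) (exp T v) :=
    hs.mapL (ContinuousLinearMap.apply ℂ B v)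
  have hns : Summable (fun m : ℕ => ‖((m.factorial⁻¹ : ℂ) • T ^ m) v‖) :=
    Summable.of_nonneg_of_le (fun _ => norm_nonneg _) hkey hgeo
  calc ‖exp T v‖
      = ‖∑' m : ℕ, ((m.factorial⁻¹ : ℂ) • T ^ m) v‖ := by rw [hsv.tsum_eq]
    _ ≤ ∑' m : ℕ, ‖((m.factorial⁻¹ : ℂ) • T ^ m) v‖ := norm_tsum_le_tsum_norm hns
    _ ≤ ∑' m : ℕ, ‖v‖ * (c * |x|) ^ m := Summable.tsum_le_tsum hkey hns hgeo
    _ = ‖v‖ * (1 - c * |x|)⁻¹ := by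
        rw [tsum_mul_left, tsum_geometric_of_lt_one hr0 hx]
    _ = ‖v‖ / (1 - c * |x|) := (div_eq_mul_inv _ _).symm

variable {n : Type*} [Fintype n] [DecidableEq n]

lemma toEuclideanCLM_exp (M : Matrix n n ℂ) :
    Matrix.toEuclideanCLM (𝕜 := ℂ) (exp M) = exp (Matrix.toEuclideanCLM (𝕜 := ℂ) M) := by
  set Φ := Matrix.toEuclideanCLM (𝕜 := ℂ) (n := n) with hΦ
  let Φe : Matrix n n ℂ ≃ₗ[ℂ] (EuclideanSpace ℂ n →L[ℂ] EuclideanSpace ℂ n) :=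
    Matrix.toEuclideanLin.trans LinearMap.toContinuousLinearMap
  have hΦe : ∀ A, Φ A = Φe A := fun _ => rfl
  have hsymm : ∀ b, Φ.symm b = Φe.symm b := by
    intro b
    apply Φe.injective
    rw [← hΦe, Φ.apply_symm_apply, Φe.apply_symm_apply]
  have hcont : Continuous (Φ.symm : _ → Matrix n n ℂ) := by
    rw [show (⇑Φ.symm) = ⇑Φe.symm from funext hsymm]
    exact Φe.toContinuousLinearEquiv.symm.continuous
  have hs : HasSum (fun k => (k.factorial⁻¹ : ℂ) • (Φ M) ^ k) (exp (Φ M)) :=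
    exp_series_hasSum_exp' (Φ M)
  have hs2 := hs.map Φ.symm hcont
  have hs3 : HasSum (fun k => (k.factorial⁻¹ : ℂ) • M ^ k) (Φ.symm (exp (Φ M))) := by
    have hterm : ∀ k : ℕ, Φ.symm ((k.factorial⁻¹ : ℂ) • (Φ M) ^ k)
        = (k.factorial⁻¹ : ℂ) • M ^ k := by
      intro k
      rw [map_smul, map_pow, Φ.symm_apply_apply]
    simpa [Function.comp_def, hterm] using hs2
  have : exp M = Φ.symm (exp (Φ M)) := by
    rw [exp_eq_tsum ℂ]
    exact hs3.tsum_eq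
  rw [this, Φ.apply_symm_apply]

end Aux

/-- If `‖ad_H^m(V)‖ ≤ ‖V‖ c^m m!` for all `m ≥ 1`, then for `c|x| < 1`,
`‖e^{xH} V e^{-xH}‖ ≤ ‖V‖ / (1 - c|x|)`. -/
theorem conjugated_norm_bound {n : Type*} [Fintype n] [DecidableEq n]
    (H V : Matrix n n ℂ) (c : ℝ) (hc : 0 < c)
    (had : ∀ m : ℕ, 1 ≤ m →
      opNorm ((adAction H)^[m] V) ≤ opNorm V * c ^ m * m.factorial)
    (x : ℝ) (hx : c * |x| < 1) :
    opNorm (NormedSpace.exp (x • H) * V * NormedSpace.exp ((-x) • H)) ≤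
      opNorm V / (1 - c * |x|) := by
  set Φ := Matrix.toEuclideanCLM (𝕜 := ℂ) (n := n) with hΦ
  have hop : ∀ A : Matrix n n ℂ, opNorm A = ‖Φ A‖ := fun _ => rfl
  have hsmul : ∀ (t : ℝ) (M : Matrix n n ℂ), t • M = (t : ℂ) • M := by
    intro t M
    rw [← algebraMap_smul ℂ t M, Complex.coe_algebraMap]
  set h : EuclideanSpace ℂ n →L[ℂ] EuclideanSpace ℂ n := Φ H with hh
  set v : EuclideanSpace ℂ n →L[ℂ] EuclideanSpace ℂ n := Φ V with hv
  have key : Φ (NormedSpace.exp (x • H) * V * NormedSpace.exp ((-x) • H))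
      = NormedSpace.exp ((x : ℂ) • h) * v * NormedSpace.exp (-((x : ℂ) • h)) := by
    rw [map_mul, map_mul, toEuclideanCLM_exp, toEuclideanCLM_exp]
    have h1 : Φ (x • H) = (x : ℂ) • h := by rw [hsmul, map_smul]
    have h2 : Φ ((-x) • H) = -((x : ℂ) • h) := by
      rw [hsmul, map_smul, ← hh]
      push_cast
      module
    rw [h1, h2]
  -- transport of iterated commutators
  have hconj : ∀ m : ℕ,
      (fun w : EuclideanSpace ℂ n →L[ℂ] EuclideanSpace ℂ n => h * w - w * h)^[m] v
        = Φ ((adAction H)^[m] V) := by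
    intro m
    induction m with
    | zero => simp [hv]
    | succ m ih =>
      rw [Function.iterate_succ_apply', Function.iterate_succ_apply', ih]
      simp [adAction, map_sub, map_mul, hh]
  have had' : ∀ m : ℕ, 1 ≤ m →
      ‖(fun w : EuclideanSpace ℂ n →L[ℂ] EuclideanSpace ℂ n => h * w - w * h)^[m] v‖
        ≤ ‖v‖ * c ^ m * m.factorial := by
    intro m hm
    rw [hconj m, ← hop]
    have : ‖v‖ = opNorm V := (hop V).symm
    rw [this]
    exact had m hm
  rw [hop, key, show opNorm V = ‖v‖ from hop V]
  exact abstract_bound h v c hc had' x hx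

end CMI
end
end

section
/- Let H and V be complex square matrices of the same size and t ≥ 0. Then ‖e^{t(H+V)} e^{−tH}‖ ≤ exp(∫₀^t ‖e^{xH} V e^{−xH}‖ dx), where ‖·‖ is the operator norm. -/
open scoped Classical ComplexOrder
noncomputable section

namespace CMI

open NormedSpace intervalIntegral

/-- Grönwall-type bound in a Banach algebra. -/
lemma key {𝔸 : Type*} [NormedRing 𝔸] [NormedAlgebra ℝ 𝔸] [CompleteSpace 𝔸]
    (h1 : ‖(1 : 𝔸)‖ ≤ 1) (h v : 𝔸) (t : ℝ) (ht : 0 ≤ t) :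
    ‖exp (t • (h + v)) * exp ((-t) • h)‖ ≤
      Real.exp (∫ x in (0:ℝ)..t, ‖exp (x • h) * v * exp ((-x) • h)‖) := by
  set f : ℝ → 𝔸 := fun x => exp (x • (h + v)) * exp ((-x) • h) with hf
  set w : ℝ → 𝔸 := fun x => exp (x • h) * v * exp ((-x) • h) with hw
  -- continuity of x ↦ exp (x • a)
  have hexp : ∀ a : 𝔸, Continuous fun x : ℝ => exp (x • a) := by
    intro a
    exact continuous_iff_continuousAt.2 fun x => (hasDerivAt_exp_smul_const' a x).continuousAt
  have hexpneg : ∀ a : 𝔸, Continuous fun x : ℝ => exp ((-x) • a) := by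
    intro a
    exact (hexp a).comp continuous_neg
  have hwcont : Continuous fun x => ‖w x‖ :=
    (((hexp h).mul continuous_const).mul (hexpneg h)).norm
  have hfcont : Continuous f := (hexp (h + v)).mul (hexpneg h)
  -- derivative of f
  have hfd : ∀ x : ℝ, HasDerivAt f (f x * w x) x := by
    intro x
    have d1 : HasDerivAt (fun s : ℝ => exp (s • (h + v)))
        ((h + v) * exp (x • (h + v))) x := hasDerivAt_exp_smul_const' (h + v) x
    have d2 : HasDerivAt (fun s : ℝ => exp ((-s) • h))
        (-(h * exp ((-x) • h))) x := by
      have := (hasDerivAt_exp_smul_const' h (-x)).scomp x (hasDerivAt_neg x)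
      simpa [Function.comp_def] using this
    have := d1.mul d2
    convert this using 1
    on_goal 1 => rfl
    have c1 : (h + v) * exp (x • (h + v)) = exp (x • (h + v)) * (h + v) :=
      (((Commute.refl (h + v)).smul_right x).exp_right).eq
    have c2 : h * exp ((-x) • h) = exp ((-x) • h) * h :=
      (((Commute.refl h).smul_right (-x)).exp_right).eq
    have e2e : exp ((-x) • h) * exp (x • h) = 1 := by
      let +nondep : NormedAlgebra ℚ 𝔸 := .restrictScalars ℚ ℝ 𝔸
      rw [← exp_add_of_commute (((Commute.refl h).smul_left (-x)).smul_right x)]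
      rw [← add_smul, neg_add_cancel, zero_smul, exp_zero]
    simp only [hf, hw]
    calc exp (x • (h + v)) * exp ((-x) • h) * (exp (x • h) * v * exp ((-x) • h))
        = exp (x • (h + v)) * ((exp ((-x) • h) * exp (x • h)) * (v * exp ((-x) • h))) := by
          noncomm_ring
      _ = exp (x • (h + v)) * (v * exp ((-x) • h)) := by rw [e2e, one_mul]
      _ = (h + v) * exp (x • (h + v)) * exp ((-x) • h) +
            exp (x • (h + v)) * -(h * exp ((-x) • h)) := by
          rw [c1]; noncomm_ring
  -- the integral function
  set g : ℝ → ℝ := fun x => ∫ s in (0:ℝ)..x, ‖w s‖ with hg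
  have hgd : ∀ x : ℝ, HasDerivAt g (‖w x‖) x := fun x =>
    intervalIntegral.integral_hasDerivAt_right (hwcont.intervalIntegrable _ _)
      (hwcont.stronglyMeasurableAtFilter _ _) hwcont.continuousAt
  -- ε-slack Grönwall
  have main : ∀ ε > (0:ℝ), ‖f t‖ ≤ Real.exp (g t + ε * t) := by
    intro ε hε
    set B : ℝ → ℝ := fun x => Real.exp (g x + ε * x) with hB
    have hBd : ∀ x : ℝ, HasDerivAt B (B x * (‖w x‖ + ε)) x := by
      intro x
      have := ((hgd x).add ((hasDerivAt_id x).const_mul ε)).exp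
      simpa [hB] using this
    have hB0 : ‖f 0‖ ≤ B 0 := by
      have : f 0 = 1 := by
        simp [hf, zero_smul, exp_zero]
      rw [this, hB]
      simpa [hg, intervalIntegral.integral_same] using h1
    have := image_norm_le_of_norm_deriv_right_lt_deriv_boundary
      (hfcont.continuousOn) (fun x _ => (hfd x).hasDerivWithinAt) hB0 hBd
      (fun x _ hxB => ?_) (Set.right_mem_Icc.2 ht)
    · exact this
    · calc ‖f x * w x‖ ≤ ‖f x‖ * ‖w x‖ := norm_mul_le _ _
        _ = B x * ‖w x‖ := by rw [hxB]
        _ < B x * (‖w x‖ + ε) := by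
            exact mul_lt_mul_of_pos_left (lt_add_of_pos_right _ hε) (Real.exp_pos _)
  -- take ε → 0⁺
  have hlim : Filter.Tendsto (fun ε : ℝ => Real.exp (g t + ε * t)) (nhdsWithin 0 (Set.Ioi 0))
      (nhds (Real.exp (g t + 0 * t))) := by
    apply Filter.Tendsto.mono_left _ nhdsWithin_le_nhds
    exact (Real.continuous_exp.comp (continuous_const.add (continuous_id.mul continuous_const))).continuousAt
  have h2 := ge_of_tendsto hlim (Filter.eventually_of_mem self_mem_nhdsWithin
    (fun ε hε => main ε hε))
  simp only [zero_mul, add_zero] at h2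
  exact h2



/-- For complex square matrices `H, V` and `t ≥ 0`,
`‖e^{t(H+V)} e^{-tH}‖ ≤ exp(∫₀^t ‖e^{xH} V e^{-xH}‖ dx)`. -/
theorem exp_perturbation_norm_bound {n : Type*} [Fintype n] [DecidableEq n]
    (H V : Matrix n n ℂ) (t : ℝ) (ht : 0 ≤ t) :
    opNorm (NormedSpace.exp (t • (H + V)) * NormedSpace.exp ((-t) • H)) ≤
      Real.exp (∫ x in (0 : ℝ)..t,
        opNorm (NormedSpace.exp (x • H) * V * NormedSpace.exp ((-x) • H))) := by
  letI : SeminormedRing (Matrix n n ℂ) := Matrix.linftyOpSemiNormedRing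
  letI : NormedRing (Matrix n n ℂ) := Matrix.linftyOpNormedRing
  letI : NormedAlgebra ℂ (Matrix n n ℂ) := Matrix.linftyOpNormedAlgebra
  letI : CompleteSpace (Matrix n n ℂ) := FiniteDimensional.complete ℂ _
  set Φ := Matrix.toEuclideanCLM (n := n) (𝕜 := ℂ) with hΦdef
  have hΦcont : Continuous ⇑Φ :=
    LinearMap.continuous_of_finiteDimensional
      (f := (Matrix.toEuclideanLin.trans LinearMap.toContinuousLinearMap :
        Matrix n n ℂ ≃ₗ[ℂ] (EuclideanSpace ℂ n →L[ℂ] EuclideanSpace ℂ n)).toLinearMap)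
  have hop : ∀ A : Matrix n n ℂ, opNorm A = ‖Φ A‖ := fun A => rfl
  have hmap : ∀ M : Matrix n n ℂ, Φ (exp M) = exp (Φ M) := fun M =>
    let +nondep : NormedAlgebra ℚ (Matrix n n ℂ) := .restrictScalars ℚ ℂ _
    map_exp Φ hΦcont M
  have hsmul : ∀ (r : ℝ) (M : Matrix n n ℂ), Φ (r • M) = r • Φ M := by
    intro r M
    rw [RCLike.real_smul_eq_coe_smul (K := ℂ) r M, map_smul]
    exact (RCLike.real_smul_eq_coe_smul (K := ℂ) r (Φ M)).symm
  simp only [hop, map_mul, hmap, hsmul, map_add]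
  exact key ContinuousLinearMap.norm_id_le (Φ H) (Φ V) t ht

end CMI
end
end

section
/- Let 𝒜 be a unital complex Banach algebra (for instance, the algebra of linear endomorphisms of a finite-dimensional normed space), let a, b ∈ 𝒜 and t ≥ 0, and suppose ‖exp(s a)‖ ≤ 1 and ‖exp(s b)‖ ≤ 1 for every s ∈ [0, t]. Then ‖exp(t a) − exp(t b)‖ ≤ t ‖a − b‖. -/
noncomputable section

open NormedSpace

private lemma exp_real_eq_exp_complex {𝒜 : Type*} [NormedRing 𝒜]
    [NormedAlgebra ℂ 𝒜] [CompleteSpace 𝒜] (a : 𝒜) (s : ℝ) :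
    exp (s • a) = exp ((s : ℂ) • a) := by
  rw [Complex.coe_smul]

/-- In a unital complex Banach algebra, if `‖exp(s a)‖ ≤ 1` and
`‖exp(s b)‖ ≤ 1` for all `s ∈ [0, t]`, then `‖exp(t a) - exp(t b)‖ ≤ t ‖a - b‖`. -/
theorem exp_sub_exp_norm_le_of_contractive {𝒜 : Type*} [NormedRing 𝒜]
    [NormedAlgebra ℂ 𝒜] [CompleteSpace 𝒜] (a b : 𝒜) (t : ℝ) (ht : 0 ≤ t)
    (ha : ∀ s : ℝ, 0 ≤ s → s ≤ t → ‖NormedSpace.exp ((s : ℂ) • a)‖ ≤ 1)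
    (hb : ∀ s : ℝ, 0 ≤ s → s ≤ t → ‖NormedSpace.exp ((s : ℂ) • b)‖ ≤ 1) :
    ‖NormedSpace.exp ((t : ℂ) • a) - NormedSpace.exp ((t : ℂ) • b)‖ ≤ t * ‖a - b‖ := by
  set f : ℝ → 𝒜 := fun s => exp (s • a) * exp ((t - s) • b) with hf
  have hderiv : ∀ s : ℝ, HasDerivAt f
      (exp (s • a) * (a - b) * exp ((t - s) • b)) s := by
    intro s
    have h1 : HasDerivAt (fun u : ℝ => exp (u • a)) (exp (s • a) * a) s :=
      hasDerivAt_exp_smul_const a s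
    have h2 : HasDerivAt (fun u : ℝ => exp ((t - u) • b))
        (-(exp ((t - s) • b) * b)) s := by
      have h0 : HasDerivAt (fun u : ℝ => t - u) (-1) s := by
        simpa using (hasDerivAt_id s).const_sub t
      have := (hasDerivAt_exp_smul_const b (t - s)).scomp s h0
      simpa [Function.comp_def] using this
    have := h1.mul h2
    convert this using 1
    · rfl
    have hc : Commute (exp ((t - s) • b)) b :=
      (((Commute.refl b).smul_left (t - s)).exp_left)
    rw [hc.eq]
    noncomm_ring
  have hbound : ∀ s ∈ Set.Icc (0 : ℝ) t,
      ‖exp (s • a) * (a - b) * exp ((t - s) • b)‖ ≤ ‖a - b‖ := by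
    rintro s ⟨hs0, hst⟩
    calc ‖exp (s • a) * (a - b) * exp ((t - s) • b)‖
        ≤ ‖exp (s • a) * (a - b)‖ * ‖exp ((t - s) • b)‖ := norm_mul_le _ _
      _ ≤ ‖exp (s • a)‖ * ‖a - b‖ * ‖exp ((t - s) • b)‖ := by
          gcongr; exact norm_mul_le _ _
      _ ≤ 1 * ‖a - b‖ * 1 := by
          gcongr
          · rw [exp_real_eq_exp_complex]; exact ha s hs0 hst
          · rw [exp_real_eq_exp_complex]
            exact hb (t - s) (by linarith) (by linarith)
      _ = ‖a - b‖ := by ring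
  have hmain := (convex_Icc (0 : ℝ) t).norm_image_sub_le_of_norm_hasDerivWithin_le
    (fun s hs => (hderiv s).hasDerivWithinAt) hbound
    (Set.left_mem_Icc.mpr ht) (Set.right_mem_Icc.mpr ht)
  have hft : f t = exp ((t : ℂ) • a) := by
    simp [hf, exp_real_eq_exp_complex, NormedSpace.exp_zero]
  have hf0 : f 0 = exp ((t : ℂ) • b) := by
    simp [hf, exp_real_eq_exp_complex, NormedSpace.exp_zero]
  rw [hft, hf0] at hmain
  calc ‖exp ((t : ℂ) • a) - exp ((t : ℂ) • b)‖ ≤ ‖a - b‖ * ‖t - 0‖ := hmain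
    _ = t * ‖a - b‖ := by rw [sub_zero, Real.norm_of_nonneg ht]; ring
end
end

section
/- Let H and V be complex square matrices of the same size. Then the map s ↦ exp(H + sV) from ℝ to matrices is differentiable at s = 0, with derivative ∫₀¹ e^{xH} V e^{(1−x)H} dx. -/
set_option maxHeartbeats 1000000


open scoped Classical
noncomputable section

namespace CMI

open NormedSpace Filter

section AuxLinfty

attribute [local instance] Matrix.linftyOpNormedRing Matrix.linftyOpNormedAlgebra

variable {n : Type*} [Fintype n] [DecidableEq n]

lemma aux_hasDerivAt_exp_smul (A : Matrix n n ℂ) (x : ℝ) :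
    HasDerivAt (fun t : ℝ => exp (t • A)) (exp (x • A) * A) x := by
  exact hasDerivAt_exp_smul_const A x

/-- Derivative of Duhamel's interpolation, stated in purely topological form
(so it can be transferred to other norm instances with the same topology). -/
lemma aux_key (H V : Matrix n n ℂ) (s x : ℝ) :
    Tendsto (slope (fun t : ℝ => exp (t • (H + s • V)) * exp ((1 - t) • H)) x)
      (nhdsWithin x {x}ᶜ)
      (nhds (s • (exp (x • (H + s • V)) * V * exp ((1 - x) • H)))) := by
  apply hasDerivAt_iff_tendsto_slope.mp
  set A := H + s • V with hA
  have h1 : HasDerivAt (fun t : ℝ => exp (t • A)) (exp (x • A) * A) x :=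
    aux_hasDerivAt_exp_smul A x
  have hinner : HasDerivAt (fun t : ℝ => 1 - t) (-1 : ℝ) x := by
    simpa using (hasDerivAt_id x).const_sub 1
  have h2 : HasDerivAt (fun t : ℝ => exp ((1 - t) • H))
      ((-1 : ℝ) • (exp ((1 - x) • H) * H)) x :=
    (aux_hasDerivAt_exp_smul H (1 - x)).scomp x hinner
  have hF := h1.mul h2
  have hcomm : exp ((1 - x) • H) * H = H * exp ((1 - x) • H) :=
    (((Commute.refl H).smul_left ((1 : ℝ) - x)).exp_left).eq
  refine hF.congr_deriv ?_
  rw [neg_one_smul, mul_neg, hcomm, ← sub_eq_add_neg, mul_assoc, mul_assoc, ← mul_sub,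
    ← sub_mul]
  have : A - H = s • V := by rw [hA]; abel
  rw [this, smul_mul_assoc, mul_smul_comm]

lemma aux_cont (H V : Matrix n n ℂ) :
    Continuous (fun p : ℝ × ℝ =>
      exp (p.2 • (H + p.1 • V)) * V * exp ((1 - p.2) • H)) := by
  have hexp : Continuous (exp : Matrix n n ℂ → Matrix n n ℂ) :=
    NormedSpace.exp_continuous
  have c1 : Continuous fun p : ℝ × ℝ => exp (p.2 • (H + p.1 • V)) :=
    hexp.comp (continuous_snd.smul (continuous_const.add
      (continuous_fst.smul continuous_const)))
  have c2 : Continuous fun p : ℝ × ℝ => exp ((1 - p.2) • H) :=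
    hexp.comp (((continuous_const.sub continuous_snd).smul continuous_const))
  exact (c1.mul continuous_const).mul c2

lemma aux_cont_one (H V : Matrix n n ℂ) (s : ℝ) :
    Continuous (fun x : ℝ =>
      exp (x • (H + s • V)) * V * exp ((1 - x) • H)) := by
  have hexp : Continuous (exp : Matrix n n ℂ → Matrix n n ℂ) :=
    NormedSpace.exp_continuous
  have c1 : Continuous fun x : ℝ => exp (x • (H + s • V)) :=
    hexp.comp (continuous_id.smul continuous_const)
  have c2 : Continuous fun x : ℝ => exp ((1 - x) • H) :=
    hexp.comp ((continuous_const.sub continuous_id).smul continuous_const)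
  exact (c1.mul continuous_const).mul c2

end AuxLinfty

attribute [local instance] Matrix.normedAddCommGroup Matrix.normedSpace

/-- The map `s ↦ exp(H + sV)` is differentiable at `s = 0` with
derivative `∫₀¹ e^{xH} V e^{(1-x)H} dx`. -/
theorem hasDerivAt_exp_perturbation {n : Type*} [Fintype n] [DecidableEq n]
    (H V : Matrix n n ℂ) :
    HasDerivAt (fun s : ℝ => NormedSpace.exp (H + s • V))
      (∫ x in (0 : ℝ)..(1 : ℝ),
        NormedSpace.exp (x • H) * V * NormedSpace.exp ((1 - x) • H))
      0 := by
  set G : ℝ → ℝ → Matrix n n ℂ := fun s x =>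
    exp (x • (H + s • V)) * V * exp ((1 - x) • H) with hG
  set g : ℝ → Matrix n n ℂ := fun s => ∫ x in (0:ℝ)..(1:ℝ), G s x with hg
  have hGcont : Continuous (Function.uncurry G) := aux_cont H V
  have hGscont : ∀ s : ℝ, Continuous fun x => G s x := fun s =>
    aux_cont_one H V s
  have hgcont : Continuous g :=
    intervalIntegral.continuous_parametric_intervalIntegral_of_continuous' hGcont 0 1
  -- Duhamel's formula
  have duhamel : ∀ s : ℝ, exp (H + s • V) - exp H = s • g s := by
    intro s
    have hder : ∀ x ∈ Set.uIcc (0:ℝ) 1,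
        HasDerivAt (fun t : ℝ => exp (t • (H + s • V)) * exp ((1 - t) • H))
          (s • G s x) x := fun x _ =>
      hasDerivAt_iff_tendsto_slope.mpr (aux_key H V s x)
    have hint :=
      ((hGscont s).const_smul s).intervalIntegrable (μ := MeasureTheory.volume) 0 1
    have := intervalIntegral.integral_eq_sub_of_hasDerivAt hder hint
    rw [← intervalIntegral.integral_smul, this]
    simp [NormedSpace.exp_zero]
  -- the stated derivative equals `g 0`
  have hg0 : (∫ x in (0:ℝ)..(1:ℝ),
      exp (x • H) * V * exp ((1 - x) • H)) = g 0 := by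
    simp [hg, hG]
  rw [hg0]
  refine hasDerivAt_iff_tendsto_slope.mpr ?_
  have heq : ∀ᶠ s in nhdsWithin (0:ℝ) {(0:ℝ)}ᶜ,
      g s = slope (fun s : ℝ => exp (H + s • V)) 0 s := by
    filter_upwards [self_mem_nhdsWithin] with s hs
    have hs0 : s ≠ 0 := hs
    rw [slope_def_module, sub_zero, zero_smul, add_zero, duhamel s, inv_smul_smul₀ hs0]
  exact Tendsto.congr' heq ((hgcont.tendsto 0).mono_left nhdsWithin_le_nhds)

end CMI
end
end
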